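/- Let (p_m), (q_n) be positive sequences with partial sums P_m, Q_n strictly increasing to infinity, satisfying P_{m−1}/P_m → 1 and Q_{n−1}/Q_n → 1. Let (u_{mn}) be a double sequence of complex numbers whose weighted means σ_{mn} are P-convergent to ℓ. If (u_{mn}) is slowly oscillating relative to (P_m), slowly oscillating relative to (Q_n), and slowly oscillating relative to (Q_n) in the strong sense, then (u_{mn}) is P-convergent to ℓ. -/

import Mathlib

set_option maxHeartbeats 1000000


open Filter

/-- Difference of two partial sums over ranges is a sum over an `Ico` block. -/
lemma sum_diff_block {M : Type*} [AddCommGroup M] (f : ℕ → M) {a a' : ℕ} (h : a ≤ a') :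
    (∑ i ∈ Finset.range (a' + 1), f i) - ∑ i ∈ Finset.range (a + 1), f i
      = ∑ i ∈ Finset.Ico (a + 1) (a' + 1), f i := by
  rw [Finset.range_eq_Ico, Finset.range_eq_Ico,
    ← Finset.sum_Ico_consecutive f (Nat.zero_le (a + 1)) (by omega : a + 1 ≤ a' + 1)]
  abel

/-- Tauberian theorem: slow oscillation conditions for complex double sequences. -/
theorem stmt12 (u : ℕ → ℕ → ℂ) (p q : ℕ → ℝ)
    (hp : ∀ m, 0 < p m) (hq : ∀ n, 0 < q n)
    (P Q : ℕ → ℝ)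
    (hP : ∀ m : ℕ, P m = ∑ i ∈ Finset.range (m + 1), p i)
    (hQ : ∀ n : ℕ, Q n = ∑ j ∈ Finset.range (n + 1), q j)
    (hPtop : Tendsto P atTop atTop) (hQtop : Tendsto Q atTop atTop)
    (hPratio : Tendsto (fun m : ℕ => P (m - 1) / P m) atTop (nhds 1))
    (hQratio : Tendsto (fun n : ℕ => Q (n - 1) / Q n) atTop (nhds 1))
    (σ : ℕ → ℕ → ℂ)
    (hσ : ∀ m n : ℕ, σ m n =
      (∑ i ∈ Finset.range (m + 1), ∑ j ∈ Finset.range (n + 1),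
        (p i * q j : ℝ) * u i j) / ((P m * Q n : ℝ) : ℂ))
    (ℓ : ℂ)
    (hsum : ∀ ε > (0 : ℝ), ∃ n₀ : ℕ, ∀ m n : ℕ, n₀ ≤ m → n₀ ≤ n → ‖σ m n - ℓ‖ < ε)
    (hSOP : ∀ ε > (0 : ℝ), ∃ n₀ : ℕ, ∃ l > (1 : ℝ),
      ∀ m n i : ℕ, n₀ ≤ m → n₀ ≤ n → m ≤ i → P i ≤ l * P m → ‖u i n - u m n‖ ≤ ε)
    (hSOQ : ∀ ε > (0 : ℝ), ∃ n₀ : ℕ, ∃ k > (1 : ℝ),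
      ∀ m n j : ℕ, n₀ ≤ m → n₀ ≤ n → n ≤ j → Q j ≤ k * Q n → ‖u m j - u m n‖ ≤ ε)
    (hSOQstrong : ∀ ε > (0 : ℝ), ∃ n₀ : ℕ, ∃ l > (1 : ℝ), ∃ k > (1 : ℝ),
      ∀ m n i j : ℕ, n₀ ≤ m → n₀ ≤ n → m ≤ i → n ≤ j →
        P i ≤ l * P m → Q j ≤ k * Q n → ‖u i j - u i n‖ ≤ ε) :
    ∀ ε > (0 : ℝ), ∃ n₀ : ℕ, ∀ m n : ℕ, n₀ ≤ m → n₀ ≤ n → ‖u m n - ℓ‖ < ε := by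
  classical
  have hPpos : ∀ m, 0 < P m := fun m => by
    rw [hP]; exact Finset.sum_pos (fun i _ => hp i) (by simp)
  have hQpos : ∀ n, 0 < Q n := fun n => by
    rw [hQ]; exact Finset.sum_pos (fun i _ => hq i) (by simp)
  have hPmono : StrictMono P := strictMono_nat_of_lt_succ (fun m => by
    rw [hP (m + 1), Finset.sum_range_succ, ← hP m]; linarith [hp (m + 1)])
  have hQmono : StrictMono Q := strictMono_nat_of_lt_succ (fun n => by
    rw [hQ (n + 1), Finset.sum_range_succ, ← hQ n]; linarith [hq (n + 1)])
  intro ε hε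
  set ε' := ε / 4 with hε'def
  have hε'pos : 0 < ε' := by positivity
  obtain ⟨n₁, l₁, hl₁, hP1⟩ := hSOP ε' hε'pos
  obtain ⟨n₂, l₂, hl₂, k₂, hk₂, hstr⟩ := hSOQstrong ε' hε'pos
  set lam := min l₁ l₂ with hlamdef
  have hlam : 1 < lam := lt_min hl₁ hl₂
  set kap := k₂ with hkapdef
  have hkap : 1 < kap := hk₂
  set lam0 := (1 + lam) / 2 with hlam0def
  set kap0 := (1 + kap) / 2 with hkap0def
  have hlam0 : 1 < lam0 := by rw [hlam0def]; linarith
  have hlam0lt : lam0 < lam := by rw [hlam0def]; linarith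
  have hkap0 : 1 < kap0 := by rw [hkap0def]; linarith
  have hkap0lt : kap0 < kap := by rw [hkap0def]; linarith
  have hlampos : (0 : ℝ) < lam := by linarith
  have hkappos : (0 : ℝ) < kap := by linarith
  set δ := ε' * ((lam0 - 1) * (kap0 - 1)) / (4 * lam * kap) with hδdef
  have hδpos : 0 < δ := by
    apply div_pos
    · exact mul_pos hε'pos (mul_pos (by linarith) (by linarith))
    · positivity
  obtain ⟨n₃, hσb⟩ := hsum δ hδpos
  obtain ⟨N₁, hN₁⟩ := eventually_atTop.mp
    (hPratio.eventually_const_lt ((div_lt_one hlampos).mpr hlam0lt))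
  obtain ⟨N₂, hN₂⟩ := eventually_atTop.mp
    (hQratio.eventually_const_lt ((div_lt_one hkappos).mpr hkap0lt))
  refine ⟨max (max n₁ n₂) (max n₃ (max N₁ N₂)), fun m n hm hn => ?_⟩
  simp only [max_le_iff] at hm hn
  obtain ⟨⟨hm1, hm2⟩, hm3, hm4, hm5⟩ := hm
  obtain ⟨⟨hn1, hn2⟩, hn3, hn4, hn5⟩ := hn
  -- choose m' minimal with lam0 * P m ≤ P m'
  have hexP : ∃ i, lam0 * P m ≤ P i := (hPtop.eventually_ge_atTop _).exists
  have hexQ : ∃ j, kap0 * Q n ≤ Q j := (hQtop.eventually_ge_atTop _).exists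
  set m' := Nat.find hexP with hm'def
  set n' := Nat.find hexQ with hn'def
  have hm'1 : lam0 * P m ≤ P m' := Nat.find_spec hexP
  have hn'1 : kap0 * Q n ≤ Q n' := Nat.find_spec hexQ
  have hm'min : ∀ i < m', P i < lam0 * P m := fun i hi =>
    lt_of_not_ge (Nat.find_min hexP hi)
  have hn'min : ∀ j < n', Q j < kap0 * Q n := fun j hj =>
    lt_of_not_ge (Nat.find_min hexQ hj)
  have hmm' : m < m' := by
    by_contra h
    push_neg at h
    have h2 := hPmono.monotone h
    nlinarith [hPpos m]
  have hnn' : n < n' := by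
    by_contra h
    push_neg at h
    have h2 := hQmono.monotone h
    nlinarith [hQpos n]
  have hm'ub : P m' ≤ lam * P m := by
    have hprev : P (m' - 1) < lam0 * P m := hm'min _ (by omega)
    have hrat : lam0 / lam < P (m' - 1) / P m' := hN₁ m' (by omega)
    have h2 : lam0 * P m' < P (m' - 1) * lam :=
      (div_lt_div_iff₀ hlampos (hPpos m')).mp hrat
    nlinarith [hPpos m', hPpos m]
  have hn'ub : Q n' ≤ kap * Q n := by
    have hprev : Q (n' - 1) < kap0 * Q n := hn'min _ (by omega)
    have hrat : kap0 / kap < Q (n' - 1) / Q n' := hN₂ n' (by omega)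
    have h2 : kap0 * Q n' < Q (n' - 1) * kap :=
      (div_lt_div_iff₀ hkappos (hQpos n')).mp hrat
    nlinarith [hQpos n', hQpos n]
  -- block sums
  set I := Finset.Ico (m + 1) (m' + 1) with hIdef
  set J := Finset.Ico (n + 1) (n' + 1) with hJdef
  have hPblock : P m' - P m = ∑ i ∈ I, p i := by
    rw [hP, hP]; exact sum_diff_block p hmm'.le
  have hQblock : Q n' - Q n = ∑ j ∈ J, q j := by
    rw [hQ, hQ]; exact sum_diff_block q hnn'.le
  set WR := (P m' - P m) * (Q n' - Q n) with hWRdef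
  have hWRpos : 0 < WR :=
    mul_pos (sub_pos.mpr (hPmono hmm')) (sub_pos.mpr (hQmono hnn'))
  set S : ℕ → ℕ → ℂ := fun a b =>
    ∑ i ∈ Finset.range (a + 1), ∑ j ∈ Finset.range (b + 1),
      ((p i * q j : ℝ) : ℂ) * u i j with hSdef
  have hSc : ∀ a b, ((P a * Q b : ℝ) : ℂ) * σ a b = S a b := by
    intro a b
    rw [hσ a b, mul_comm, div_mul_cancel₀]
    exact_mod_cast (mul_pos (hPpos a) (hQpos b)).ne'
  set B := ∑ i ∈ I, ∑ j ∈ J, ((p i * q j : ℝ) : ℂ) * u i j with hBdef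
  have hBsum : S m' n' - S m n' - S m' n + S m n = B := by
    have h1 : ∀ b, S m' b - S m b
        = ∑ i ∈ I, ∑ j ∈ Finset.range (b + 1), ((p i * q j : ℝ) : ℂ) * u i j := by
      intro b
      exact sum_diff_block (fun i => ∑ j ∈ Finset.range (b + 1),
        ((p i * q j : ℝ) : ℂ) * u i j) hmm'.le
    calc S m' n' - S m n' - S m' n + S m n
        = (S m' n' - S m n') - (S m' n - S m n) := by ring
      _ = (∑ i ∈ I, ∑ j ∈ Finset.range (n' + 1), ((p i * q j : ℝ) : ℂ) * u i j)
          - ∑ i ∈ I, ∑ j ∈ Finset.range (n + 1), ((p i * q j : ℝ) : ℂ) * u i j := by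
          rw [h1, h1]
      _ = ∑ i ∈ I, ((∑ j ∈ Finset.range (n' + 1), ((p i * q j : ℝ) : ℂ) * u i j)
          - ∑ j ∈ Finset.range (n + 1), ((p i * q j : ℝ) : ℂ) * u i j) :=
          (Finset.sum_sub_distrib _ _).symm
      _ = B := Finset.sum_congr rfl fun i _ =>
          sum_diff_block (fun j => ((p i * q j : ℝ) : ℂ) * u i j) hnn'.le
  have hWRsum : WR = ∑ i ∈ I, ∑ j ∈ J, p i * q j := by
    rw [hWRdef, hPblock, hQblock, Finset.sum_mul_sum]
  have hWC : ((WR : ℝ) : ℂ) = ∑ i ∈ I, ∑ j ∈ J, ((p i * q j : ℝ) : ℂ) := by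
    rw [hWRsum]; push_cast; rfl
  -- oscillation bound on the block
  have osc : ∀ i ∈ I, ∀ j ∈ J, ‖u m n - u i j‖ ≤ 2 * ε' := by
    intro i hi j hj
    rw [hIdef, Finset.mem_Ico] at hi
    rw [hJdef, Finset.mem_Ico] at hj
    have hPi : P i ≤ lam * P m :=
      le_trans (hPmono.monotone (by omega : i ≤ m')) hm'ub
    have hQj : Q j ≤ kap * Q n :=
      le_trans (hQmono.monotone (by omega : j ≤ n')) hn'ub
    have e1 : ‖u i n - u m n‖ ≤ ε' :=
      hP1 m n i hm1 hn1 (by omega)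
        (hPi.trans (mul_le_mul_of_nonneg_right (min_le_left _ _) (hPpos m).le))
    have e2 : ‖u i j - u i n‖ ≤ ε' :=
      hstr m n i j hm2 hn2 (by omega) (by omega)
        (hPi.trans (mul_le_mul_of_nonneg_right (min_le_right _ _) (hPpos m).le)) hQj
    have hsplit : u i j - u m n = (u i j - u i n) + (u i n - u m n) := by ring
    rw [norm_sub_rev, hsplit]
    calc ‖(u i j - u i n) + (u i n - u m n)‖
        ≤ ‖u i j - u i n‖ + ‖u i n - u m n‖ := norm_add_le _ _
      _ ≤ 2 * ε' := by linarith
  -- first bound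
  have bound1 : ‖u m n * ((WR : ℝ) : ℂ) - B‖ ≤ 2 * ε' * WR := by
    have hsplit : u m n * ((WR : ℝ) : ℂ) - B
        = ∑ i ∈ I, ∑ j ∈ J, ((p i * q j : ℝ) : ℂ) * (u m n - u i j) := by
      rw [hWC, hBdef, Finset.mul_sum, ← Finset.sum_sub_distrib]
      refine Finset.sum_congr rfl fun i _ => ?_
      rw [Finset.mul_sum, ← Finset.sum_sub_distrib]
      exact Finset.sum_congr rfl fun j _ => by ring
    rw [hsplit]
    calc ‖∑ i ∈ I, ∑ j ∈ J, ((p i * q j : ℝ) : ℂ) * (u m n - u i j)‖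
        ≤ ∑ i ∈ I, ∑ j ∈ J, (p i * q j) * (2 * ε') := by
          refine (norm_sum_le _ _).trans (Finset.sum_le_sum fun i hi =>
            (norm_sum_le _ _).trans (Finset.sum_le_sum fun j hj => ?_))
          rw [norm_mul, Complex.norm_real, Real.norm_eq_abs,
            abs_of_pos (mul_pos (hp i) (hq j))]
          exact mul_le_mul_of_nonneg_left (osc i hi j hj)
            (mul_pos (hp i) (hq j)).le
      _ = 2 * ε' * WR := by
          rw [hWRsum, Finset.mul_sum]
          refine Finset.sum_congr rfl fun i _ => ?_
          rw [Finset.mul_sum]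
          exact Finset.sum_congr rfl fun j _ => by ring
  -- second bound
  have bound2 : ‖B - ℓ * ((WR : ℝ) : ℂ)‖ ≤ ε' * WR := by
    have hBeq : B - ℓ * ((WR : ℝ) : ℂ)
        = ((P m' * Q n' : ℝ) : ℂ) * (σ m' n' - ℓ)
          - ((P m * Q n' : ℝ) : ℂ) * (σ m n' - ℓ)
          - ((P m' * Q n : ℝ) : ℂ) * (σ m' n - ℓ)
          + ((P m * Q n : ℝ) : ℂ) * (σ m n - ℓ) := by
      rw [← hBsum, ← hSc, ← hSc, ← hSc, ← hSc, hWRdef]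
      push_cast
      ring
    rw [hBeq]
    have hc : ∀ a b : ℕ, n₃ ≤ a → n₃ ≤ b → P a ≤ P m' → Q b ≤ Q n' →
        ‖((P a * Q b : ℝ) : ℂ) * (σ a b - ℓ)‖ ≤ P m' * Q n' * δ := by
      intro a b ha hb hPa hQb
      rw [norm_mul, Complex.norm_real, Real.norm_eq_abs,
        abs_of_pos (mul_pos (hPpos a) (hQpos b))]
      exact mul_le_mul
        (mul_le_mul hPa hQb (hQpos b).le (hPpos m').le)
        (hσb a b ha hb).le (norm_nonneg _)
        (mul_pos (hPpos m') (hQpos n')).le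
    have t1 := hc m' n' (by omega) (by omega) le_rfl le_rfl
    have t2 := hc m n' hm3 (by omega) (hPmono.monotone hmm'.le) le_rfl
    have t3 := hc m' n (by omega) hn3 le_rfl (hQmono.monotone hnn'.le)
    have t4 := hc m n hm3 hn3 (hPmono.monotone hmm'.le) (hQmono.monotone hnn'.le)
    have tri : ‖((P m' * Q n' : ℝ) : ℂ) * (σ m' n' - ℓ)
          - ((P m * Q n' : ℝ) : ℂ) * (σ m n' - ℓ)
          - ((P m' * Q n : ℝ) : ℂ) * (σ m' n - ℓ)
          + ((P m * Q n : ℝ) : ℂ) * (σ m n - ℓ)‖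
        ≤ ‖((P m' * Q n' : ℝ) : ℂ) * (σ m' n' - ℓ)‖
          + ‖((P m * Q n' : ℝ) : ℂ) * (σ m n' - ℓ)‖
          + ‖((P m' * Q n : ℝ) : ℂ) * (σ m' n - ℓ)‖
          + ‖((P m * Q n : ℝ) : ℂ) * (σ m n - ℓ)‖ := by
      refine (norm_add_le _ _).trans (add_le_add ?_ le_rfl)
      refine (norm_sub_le _ _).trans (add_le_add ?_ le_rfl)
      exact norm_sub_le _ _
    have step1 : ‖((P m' * Q n' : ℝ) : ℂ) * (σ m' n' - ℓ)
          - ((P m * Q n' : ℝ) : ℂ) * (σ m n' - ℓ)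
          - ((P m' * Q n : ℝ) : ℂ) * (σ m' n - ℓ)
          + ((P m * Q n : ℝ) : ℂ) * (σ m n - ℓ)‖
        ≤ 4 * (P m' * Q n' * δ) := by linarith
    refine step1.trans ?_
    have step2 : 4 * (P m' * Q n' * δ) ≤ 4 * ((lam * P m) * (kap * Q n) * δ) := by
      have h1 : P m' * Q n' ≤ lam * P m * (kap * Q n) :=
        mul_le_mul hm'ub hn'ub (hQpos n').le
          (mul_nonneg hlampos.le (hPpos m).le)
      have h2 := mul_le_mul_of_nonneg_right h1 hδpos.le
      linarith
    refine step2.trans ?_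
    have step3 : 4 * ((lam * P m) * (kap * Q n) * δ)
        = ε' * ((lam0 - 1) * P m * ((kap0 - 1) * Q n)) := by
      rw [hδdef]
      field_simp
    rw [step3]
    have hW1 : (lam0 - 1) * P m ≤ P m' - P m := by linarith [hm'1]
    have hW2 : (kap0 - 1) * Q n ≤ Q n' - Q n := by linarith [hn'1]
    rw [hWRdef]
    have h01 : (0:ℝ) ≤ (lam0 - 1) * P m :=
      mul_nonneg (by linarith) (hPpos m).le
    have h02 : (0:ℝ) ≤ (kap0 - 1) * Q n :=
      mul_nonneg (by linarith) (hQpos n).le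
    exact mul_le_mul_of_nonneg_left
      (mul_le_mul hW1 hW2 h02 (by linarith [sub_pos.mpr (hPmono hmm')])) hε'pos.le
  -- assemble
  have hnormW : ‖((WR : ℝ) : ℂ)‖ = WR := by
    rw [Complex.norm_real, Real.norm_eq_abs, abs_of_pos hWRpos]
  have hkey : ‖u m n - ℓ‖ * WR ≤ 3 * ε' * WR := by
    have hsplit : (u m n - ℓ) * ((WR : ℝ) : ℂ)
        = (u m n * ((WR : ℝ) : ℂ) - B) + (B - ℓ * ((WR : ℝ) : ℂ)) := by ring
    calc ‖u m n - ℓ‖ * WR = ‖(u m n - ℓ) * ((WR : ℝ) : ℂ)‖ := by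
          rw [norm_mul, hnormW]
      _ = ‖(u m n * ((WR : ℝ) : ℂ) - B) + (B - ℓ * ((WR : ℝ) : ℂ))‖ := by
          rw [hsplit]
      _ ≤ ‖u m n * ((WR : ℝ) : ℂ) - B‖ + ‖B - ℓ * ((WR : ℝ) : ℂ)‖ := norm_add_le _ _
      _ ≤ 2 * ε' * WR + ε' * WR := add_le_add bound1 bound2
      _ = 3 * ε' * WR := by ring
  have hfinal : ‖u m n - ℓ‖ ≤ 3 * ε' := le_of_mul_le_mul_right hkey hWRpos
  rw [hε'def] at hfinal
  linarith
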